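/- arXiv:2108.12595 — 3 statements merged into one kernel-verified Lean document; each statement's English description precedes it below -/
import Mathlib

section
/- Let K be a field and let U₁, U₂, V₁, V₂ be K-vector spaces with subspaces W'₁ ⊆ U₁, W'₂ ⊆ U₂, W''₁ ⊆ V₁, W''₂ ⊆ V₂. Let x' : U₁ → U₂ be linear with x'(W'₁) ⊆ W'₂, let x'' : V₁ → V₂ be linear with x''(W''₁) ⊆ W''₂, and let y : U₁ → V₂ be linear. Let x : U₁ × V₁ → U₂ × V₂ be the linear map x(u,v) = (x'(u), y(u) + x''(v)), let x̄'' : V₁⧸W''₁ → V₂⧸W''₂ be the map induced by x'', and let π : V₂ → V₂⧸W''₂ be the quotient map. Then for linear maps z₁ : W'₁ → V₁⧸W''₁ and z₂ : W'₂ → V₂⧸W''₂, the inclusion x(W_{z₁}) ⊆ W_{z₂} holds if and only if z₂(x'(u)) = x̄''(z₁(u)) + π(y(u)) for every u ∈ W'₁. -/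
/-- For subspaces `W' ⊆ U`, `W'' ⊆ V` and a linear map `z : W' → V⧸W''`, the graph
subspace `W_z = {(u,v) ∈ U × V : u ∈ W' and z(u) = v + W''}`. -/
def graphSubmodule (K : Type*) {U V : Type*} [Field K] [AddCommGroup U] [Module K U]
    [AddCommGroup V] [Module K V] (W' : Submodule K U) (W'' : Submodule K V)
    (z : W' →ₗ[K] V ⧸ W'') : Submodule K (U × V) where
  carrier := {p : U × V | ∃ hu : p.1 ∈ W', z ⟨p.1, hu⟩ = Submodule.Quotient.mk p.2}
  zero_mem' := by
    refine ⟨W'.zero_mem, ?_⟩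
    show z ⟨(0 : U), W'.zero_mem⟩ = Submodule.Quotient.mk (0 : V)
    have h0 : (⟨(0 : U), W'.zero_mem⟩ : W') = 0 := rfl
    rw [h0, map_zero]
    simp
  add_mem' := by
    rintro ⟨a₁, b₁⟩ ⟨a₂, b₂⟩ ⟨h₁, hz₁⟩ ⟨h₂, hz₂⟩
    refine ⟨W'.add_mem h₁ h₂, ?_⟩
    show z ⟨a₁ + a₂, W'.add_mem h₁ h₂⟩ = Submodule.Quotient.mk (b₁ + b₂)
    have h0 : (⟨a₁ + a₂, W'.add_mem h₁ h₂⟩ : W') = ⟨a₁, h₁⟩ + ⟨a₂, h₂⟩ := rfl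
    rw [h0, map_add, hz₁, hz₂]
    simp [Submodule.Quotient.mk_add]
  smul_mem' := by
    rintro c ⟨a, b⟩ ⟨h, hz⟩
    refine ⟨W'.smul_mem c h, ?_⟩
    show z ⟨c • a, W'.smul_mem c h⟩ = Submodule.Quotient.mk (c • b)
    have h0 : (⟨c • a, W'.smul_mem c h⟩ : W') = c • (⟨a, h⟩ : W') := rfl
    rw [h0, map_smul, hz]
    simp [Submodule.Quotient.mk_smul]

/-- The third step of the proof of Lemma 3.2: for `x(u,v) = (x'(u), y(u) + x''(v))`,
the stability `x(W_{z₁}) ⊆ W_{z₂}` holds iff `z₂ ∘ x' = x̄'' ∘ z₁ + π ∘ y` on `W'₁`. -/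
theorem graphSubmodule_stability_iff {K U₁ U₂ V₁ V₂ : Type*} [Field K]
    [AddCommGroup U₁] [Module K U₁] [AddCommGroup U₂] [Module K U₂]
    [AddCommGroup V₁] [Module K V₁] [AddCommGroup V₂] [Module K V₂]
    (W'₁ : Submodule K U₁) (W'₂ : Submodule K U₂)
    (W''₁ : Submodule K V₁) (W''₂ : Submodule K V₂)
    (x' : U₁ →ₗ[K] U₂) (hx' : ∀ u ∈ W'₁, x' u ∈ W'₂)
    (x'' : V₁ →ₗ[K] V₂) (hx'' : W''₁ ≤ W''₂.comap x'')
    (y : U₁ →ₗ[K] V₂)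
    (z₁ : W'₁ →ₗ[K] V₁ ⧸ W''₁) (z₂ : W'₂ →ₗ[K] V₂ ⧸ W''₂) :
    Submodule.map
        (LinearMap.prod ((x'.comp (LinearMap.fst K U₁ V₁)))
          ((y.comp (LinearMap.fst K U₁ V₁)) + (x''.comp (LinearMap.snd K U₁ V₁))))
        (graphSubmodule K W'₁ W''₁ z₁) ≤ graphSubmodule K W'₂ W''₂ z₂ ↔
      ∀ (u : U₁) (hu : u ∈ W'₁),
        z₂ ⟨x' u, hx' u hu⟩ =
          Submodule.mapQ W''₁ W''₂ x'' hx'' (z₁ ⟨u, hu⟩) + Submodule.mkQ W''₂ (y u) := by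
  constructor
  · intro h u hu
    obtain ⟨v, hv⟩ := Submodule.Quotient.mk_surjective W''₁ (z₁ ⟨u, hu⟩)
    have hmem : ((u, v) : U₁ × V₁) ∈ graphSubmodule K W'₁ W''₁ z₁ := ⟨hu, hv.symm⟩
    obtain ⟨hu2, hz2⟩ := h (Submodule.mem_map_of_mem hmem)
    have : z₂ ⟨x' u, hx' u hu⟩ = Submodule.Quotient.mk (y u + x'' v) := hz2
    rw [this, ← hv]
    simp [Submodule.mapQ_apply, ← Submodule.Quotient.mk_add, add_comm]
  · rintro h _ ⟨⟨a, b⟩, ⟨ha, hz⟩, rfl⟩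
    refine ⟨hx' a ha, ?_⟩
    show z₂ ⟨x' a, hx' a ha⟩ = Submodule.Quotient.mk (y a + x'' b)
    rw [h a ha, hz]
    simp [Submodule.mapQ_apply, ← Submodule.Quotient.mk_add, add_comm]
end

section
/- Let Q=(I,H,s,t) be a quiver, K a field, and for each i ∈ I let U(i), V(i) be K-vector spaces with subspaces W'(i) ⊆ U(i) and W''(i) ⊆ V(i). For each h ∈ H let x'_h : U(s h) → U(t h) be linear with x'_h(W'(s h)) ⊆ W'(t h), and let x''_h : V(s h) → V(t h) be linear with x''_h(W''(s h)) ⊆ W''(t h); write x̄''_h : V(s h)⧸W''(s h) → V(t h)⧸W''(t h) for the induced map and π_i : V(i) → V(i)⧸W''(i) for the quotient maps. Let Γ be the subspace of (Π_{i∈I} Hom_K(W'(i), V(i)⧸W''(i))) × (Π_{h∈H} Hom_K(U(s h), V(t h))) consisting of pairs (z, y) such that for every h ∈ H and every u ∈ W'(s h): z(t h)(x'_h(u)) = x̄''_h(z(s h)(u)) + π_{t h}(y_h(u)). Then the linear projection Γ → Π_{i∈I} Hom_K(W'(i), V(i)⧸W''(i)), (z,y) ↦ z, is surjective, and its kernel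 is exactly the set of pairs (0, y) with y_h(W'(s h)) ⊆ W''(t h) for every h ∈ H. -/
/-- The space `Γ` from the proof of Lemma 3.2: pairs `(z, y)` with
`z ∈ Π_{i∈I} Hom_K(W'(i), V(i)⧸W''(i))` and `y ∈ Π_{h∈H} Hom_K(U(s h), V(t h))`
such that for every arrow `h` and every `u ∈ W'(s h)`:
`z(t h)(x'_h(u)) = x̄''_h(z(s h)(u)) + π_{t h}(y_h(u))`. -/
def quiverGamma (K : Type*) [Field K] {I H : Type*} (s t : H → I)
    (U V : I → Type*) [∀ i, AddCommGroup (U i)] [∀ i, Module K (U i)]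
    [∀ i, AddCommGroup (V i)] [∀ i, Module K (V i)]
    (W' : ∀ i, Submodule K (U i)) (W'' : ∀ i, Submodule K (V i))
    (x' : ∀ h, U (s h) →ₗ[K] U (t h)) (hx' : ∀ h, ∀ u ∈ W' (s h), x' h u ∈ W' (t h))
    (x'' : ∀ h, V (s h) →ₗ[K] V (t h)) (hx'' : ∀ h, W'' (s h) ≤ (W'' (t h)).comap (x'' h)) :
    Submodule K ((∀ i, W' i →ₗ[K] V i ⧸ W'' i) × (∀ h, U (s h) →ₗ[K] V (t h))) where
  carrier := {p | ∀ (h : H) (u : W' (s h)),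
    p.1 (t h) ⟨x' h u.1, hx' h u.1 u.2⟩ =
      Submodule.mapQ (W'' (s h)) (W'' (t h)) (x'' h) (hx'' h) (p.1 (s h) u) +
        Submodule.mkQ (W'' (t h)) (p.2 h u.1)}
  zero_mem' := by
    intro h u
    simp
  add_mem' := by
    intro p q hp hq h u
    have h1 := hp h u
    have h2 := hq h u
    simp only [Prod.fst_add, Prod.snd_add, Pi.add_apply, LinearMap.add_apply, map_add]
    rw [h1, h2]
    abel
  smul_mem' := by
    intro c p hp h u
    have h1 := hp h u
    simp only [Prod.smul_fst, Prod.smul_snd, Pi.smul_apply, LinearMap.smul_apply, map_smul]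
    rw [h1]
    simp [smul_add]

/-- The short exact sequence `0 → Γ'₁ → Γ → Γ'₂ → 0` in the proof of Lemma 3.2: the
linear projection `Γ → Π_{i∈I} Hom_K(W'(i), V(i)⧸W''(i))`, `(z,y) ↦ z`, is surjective,
and its kernel consists exactly of the pairs `(0, y)` with `y_h(W'(s h)) ⊆ W''(t h)`
for every arrow `h`. -/
theorem quiverGamma_proj_surjective_and_kernel (K : Type*) [Field K] {I H : Type*}
    (s t : H → I) (U V : I → Type*) [∀ i, AddCommGroup (U i)] [∀ i, Module K (U i)]
    [∀ i, AddCommGroup (V i)] [∀ i, Module K (V i)]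
    (W' : ∀ i, Submodule K (U i)) (W'' : ∀ i, Submodule K (V i))
    (x' : ∀ h, U (s h) →ₗ[K] U (t h)) (hx' : ∀ h, ∀ u ∈ W' (s h), x' h u ∈ W' (t h))
    (x'' : ∀ h, V (s h) →ₗ[K] V (t h)) (hx'' : ∀ h, W'' (s h) ≤ (W'' (t h)).comap (x'' h)) :
    Function.Surjective
      ((LinearMap.fst K (∀ i, W' i →ₗ[K] V i ⧸ W'' i) (∀ h, U (s h) →ₗ[K] V (t h))).domRestrict
        (quiverGamma K s t U V W' W'' x' hx' x'' hx'')) ∧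
    ∀ p : quiverGamma K s t U V W' W'' x' hx' x'' hx'',
      p ∈ LinearMap.ker
          ((LinearMap.fst K (∀ i, W' i →ₗ[K] V i ⧸ W'' i)
              (∀ h, U (s h) →ₗ[K] V (t h))).domRestrict
            (quiverGamma K s t U V W' W'' x' hx' x'' hx'')) ↔
        ((p : (∀ i, W' i →ₗ[K] V i ⧸ W'' i) × (∀ h, U (s h) →ₗ[K] V (t h))).1 = 0 ∧
          ∀ h, ∀ u ∈ W' (s h),
            ((p : (∀ i, W' i →ₗ[K] V i ⧸ W'' i) ×
              (∀ h, U (s h) →ₗ[K] V (t h))).2 h) u ∈ W'' (t h)) := by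
  classical
  have hsec : ∀ i : I, ∃ σ : (V i ⧸ W'' i) →ₗ[K] V i, (W'' i).mkQ ∘ₗ σ = LinearMap.id :=
    fun i => (W'' i).mkQ.exists_rightInverse_of_surjective (Submodule.range_mkQ _)
  choose σ hσ using hsec
  constructor
  · intro z
    have hext : ∀ h : H, ∃ g : U (s h) →ₗ[K] (V (t h) ⧸ W'' (t h)),
        g ∘ₗ (W' (s h)).subtype =
          (z (t h)) ∘ₗ ((x' h).restrict (hx' h)) -
            (Submodule.mapQ (W'' (s h)) (W'' (t h)) (x'' h) (hx'' h)) ∘ₗ (z (s h)) :=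
      fun h => LinearMap.exists_extend _
    choose g hg using hext
    refine ⟨⟨(z, fun h => σ (t h) ∘ₗ g h), ?_⟩, rfl⟩
    intro h u
    have hmk : (W'' (t h)).mkQ ((σ (t h) ∘ₗ g h) u.1) = g h u.1 := by
      have := congrFun (congrArg DFunLike.coe (hσ (t h))) (g h u.1)
      simpa using this
    have hgu := congrFun (congrArg DFunLike.coe (hg h)) u
    simp only [LinearMap.coe_comp, Function.comp_apply, Submodule.coe_subtype,
      LinearMap.sub_apply] at hgu
    have hres : ((x' h).restrict (hx' h)) u = ⟨x' h u.1, hx' h u.1 u.2⟩ := rfl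
    rw [hmk, hgu, hres]
    abel
  · intro p
    constructor
    · intro hp
      have h1 : (p : (∀ i, W' i →ₗ[K] V i ⧸ W'' i) × (∀ h, U (s h) →ₗ[K] V (t h))).1 = 0 := hp
      refine ⟨h1, fun h u hu => ?_⟩
      have := p.2 h ⟨u, hu⟩
      rw [h1] at this
      simp only [Pi.zero_apply, LinearMap.zero_apply, map_zero, zero_add] at this
      rw [← Submodule.Quotient.mk_eq_zero]
      exact this.symm
    · rintro ⟨h1, h2⟩
      exact h1
end

section
/- Let Q=(I,H,s,t) be a finite quiver, K a field, and for each i ∈ I let U(i), V(i) be finite-dimensional K-vector spaces with subspaces W'(i) ⊆ U(i) and W''(i) ⊆ V(i). For each h ∈ H let x'_h : U(s h) → U(t h) be linear with x'_h(W'(s h)) ⊆ W'(t h), and x''_h : V(s h) → V(t h) be linear with x''_h(W''(s h)) ⊆ W''(t h); write x̄''_h for the induced map V(s h)⧸W''(s h) → V(t h)⧸W''(t h) and π_i : V(i) → V(i)⧸W''(i) for the quotient maps. Let Γ be the subspace of (Π_{i∈I} Hom_K(W'(i), V(i)⧸W''(i))) × (Π_{h∈H} Hom_K(U(s h), V(t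 h))) consisting of pairs (z, y) such that for every h ∈ H and every u ∈ W'(s h): z(t h)(x'_h(u)) = x̄''_h(z(s h)(u)) + π_{t h}(y_h(u)). Then dim Γ = Σ_{h∈H} [ dim W'(s h)·dim W''(t h) + (dim U(s h) − dim W'(s h))·dim V(t h) ] + Σ_{i∈I} dim W'(i)·(dim V(i) − dim W''(i)). -/
section Aux

open Module

variable (K : Type*) [Field K] {I H : Type*} (s t : H → I)
    (U V : I → Type*) [∀ i, AddCommGroup (U i)] [∀ i, Module K (U i)]
    [∀ i, AddCommGroup (V i)] [∀ i, Module K (V i)]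
    (W' : ∀ i, Submodule K (U i)) (W'' : ∀ i, Submodule K (V i))
    (x' : ∀ h, U (s h) →ₗ[K] U (t h)) (hx' : ∀ h, ∀ u ∈ W' (s h), x' h u ∈ W' (t h))
    (x'' : ∀ h, V (s h) →ₗ[K] V (t h)) (hx'' : ∀ h, W'' (s h) ≤ (W'' (t h)).comap (x'' h))

/-- The defect map whose kernel is `quiverGamma`. -/
def quiverPhi :
    ((∀ i, W' i →ₗ[K] V i ⧸ W'' i) × (∀ h, U (s h) →ₗ[K] V (t h))) →ₗ[K]
      (∀ h, W' (s h) →ₗ[K] V (t h) ⧸ W'' (t h)) where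
  toFun p := fun h =>
    (p.1 (t h)).comp ((x' h).restrict (fun u hu => hx' h u hu))
      - (Submodule.mapQ (W'' (s h)) (W'' (t h)) (x'' h) (hx'' h)).comp (p.1 (s h))
      - ((Submodule.mkQ (W'' (t h))).comp (p.2 h)).comp (W' (s h)).subtype
  map_add' p q := by
    funext h
    ext u
    simp only [Prod.fst_add, Prod.snd_add, Pi.add_apply, LinearMap.add_apply,
      LinearMap.sub_apply, LinearMap.comp_apply, map_add]
    abel
  map_smul' c p := by
    funext h
    ext u
    simp only [Prod.smul_fst, Prod.smul_snd, Pi.smul_apply, LinearMap.smul_apply,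
      LinearMap.sub_apply, LinearMap.comp_apply, map_smul, RingHom.id_apply, smul_sub]

theorem quiverPhi_apply (p) (h : H) (u : W' (s h)) :
    quiverPhi K s t U V W' W'' x' hx' x'' hx'' p h u =
      p.1 (t h) ⟨x' h u.1, hx' h u.1 u.2⟩ -
        (Submodule.mapQ (W'' (s h)) (W'' (t h)) (x'' h) (hx'' h) (p.1 (s h) u) +
          Submodule.mkQ (W'' (t h)) (p.2 h u.1)) := by
  simp only [quiverPhi, LinearMap.coe_mk, AddHom.coe_mk, LinearMap.sub_apply,
    LinearMap.comp_apply, Submodule.coe_subtype]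
  rw [show ((x' h).restrict (fun u hu => hx' h u hu)) u = ⟨x' h u.1, hx' h u.1 u.2⟩ from rfl]
  abel

theorem quiverPhi_surjective :
    Function.Surjective (quiverPhi K s t U V W' W'' x' hx' x'' hx'') := by
  intro w
  choose σ hσ using fun h =>
    (Submodule.mkQ (W'' (t h))).exists_rightInverse_of_surjective
      (Submodule.range_mkQ _)
  choose y hy using fun h => LinearMap.exists_extend ((σ h).comp (-(w h)))
  refine ⟨(0, y), ?_⟩
  funext h
  ext u
  rw [quiverPhi_apply]
  simp only [Prod.fst_zero, Pi.zero_apply, LinearMap.zero_apply, map_zero, zero_add]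
  have key : (Submodule.mkQ (W'' (t h))) (y h u.1) = -(w h u) := by
    have h1 := congrArg (fun f => f u) (congrArg (fun f => (Submodule.mkQ (W'' (t h))).comp f) (hy h))
    simp only [LinearMap.comp_apply, Submodule.coe_subtype, LinearMap.neg_apply] at h1
    rw [h1]
    have h2 := congrArg (fun f => f (-(w h u))) (hσ h)
    simpa using h2
  rw [key]
  abel

end Aux

section Aux2

variable (K : Type*) [Field K] {I H : Type*} (s t : H → I)
    (U V : I → Type*) [∀ i, AddCommGroup (U i)] [∀ i, Module K (U i)]
    [∀ i, AddCommGroup (V i)] [∀ i, Module K (V i)]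
    (W' : ∀ i, Submodule K (U i)) (W'' : ∀ i, Submodule K (V i))
    (x' : ∀ h, U (s h) →ₗ[K] U (t h)) (hx' : ∀ h, ∀ u ∈ W' (s h), x' h u ∈ W' (t h))
    (x'' : ∀ h, V (s h) →ₗ[K] V (t h)) (hx'' : ∀ h, W'' (s h) ≤ (W'' (t h)).comap (x'' h))

theorem quiverGamma_eq_ker :
    quiverGamma K s t U V W' W'' x' hx' x'' hx'' =
      LinearMap.ker (quiverPhi K s t U V W' W'' x' hx' x'' hx'') := by
  ext p
  constructor
  · intro hp
    rw [LinearMap.mem_ker]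
    funext h
    ext u
    rw [quiverPhi_apply]
    simp only [Pi.zero_apply, LinearMap.zero_apply, sub_eq_zero]
    exact hp h u
  · intro hp h u
    have h0 : quiverPhi K s t U V W' W'' x' hx' x'' hx'' p h u = 0 := by
      rw [LinearMap.mem_ker.mp hp]; rfl
    rw [quiverPhi_apply, sub_eq_zero] at h0
    exact h0


end Aux2

open Module

/-- The fibre-dimension computation in Lemma 3.2 of the paper:
`dim Γ = Σ_{h∈H} [dim W'(s h)·dim W''(t h) + (dim U(s h) − dim W'(s h))·dim V(t h)]
  + Σ_{i∈I} dim W'(i)·(dim V(i) − dim W''(i))`. -/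
theorem quiverGamma_finrank (K : Type*) [Field K] {I H : Type*} [Fintype I] [Fintype H]
    (s t : H → I) (U V : I → Type*) [∀ i, AddCommGroup (U i)] [∀ i, Module K (U i)]
    [∀ i, AddCommGroup (V i)] [∀ i, Module K (V i)]
    [∀ i, FiniteDimensional K (U i)] [∀ i, FiniteDimensional K (V i)]
    (W' : ∀ i, Submodule K (U i)) (W'' : ∀ i, Submodule K (V i))
    (x' : ∀ h, U (s h) →ₗ[K] U (t h)) (hx' : ∀ h, ∀ u ∈ W' (s h), x' h u ∈ W' (t h))
    (x'' : ∀ h, V (s h) →ₗ[K] V (t h)) (hx'' : ∀ h, W'' (s h) ≤ (W'' (t h)).comap (x'' h)) :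
    finrank K (quiverGamma K s t U V W' W'' x' hx' x'' hx'') =
      (∑ h, (finrank K (W' (s h)) * finrank K (W'' (t h)) +
        (finrank K (U (s h)) - finrank K (W' (s h))) * finrank K (V (t h)))) +
      ∑ i, finrank K (W' i) * (finrank K (V i) - finrank K (W'' i)) := by
  have hrn := LinearMap.finrank_range_add_finrank_ker
    (quiverPhi K s t U V W' W'' x' hx' x'' hx'')
  rw [LinearMap.range_eq_top.2 (quiverPhi_surjective K s t U V W' W'' x' hx' x'' hx''),
    finrank_top] at hrn
  rw [quiverGamma_eq_ker]
  rw [Module.finrank_prod, Module.finrank_pi_fintype, Module.finrank_pi_fintype] at hrn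
  rw [Module.finrank_pi_fintype] at hrn
  simp only [Module.finrank_linearMap, Submodule.finrank_quotient] at hrn
  have hsum : ∑ h, finrank K (U (s h)) * finrank K (V (t h)) =
      (∑ h, finrank K (W' (s h)) * (finrank K (V (t h)) - finrank K (W'' (t h)))) +
      ∑ h, (finrank K (W' (s h)) * finrank K (W'' (t h)) +
        (finrank K (U (s h)) - finrank K (W' (s h))) * finrank K (V (t h))) := by
    rw [← Finset.sum_add_distrib]
    refine Finset.sum_congr rfl fun h _ => ?_
    have h1 : finrank K (W' (s h)) ≤ finrank K (U (s h)) := Submodule.finrank_le _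
    have h2 : finrank K (W'' (t h)) ≤ finrank K (V (t h)) := Submodule.finrank_le _
    zify [h1, h2]
    ring
  omega
end
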